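/- Let G be a finite simple graph, let h ∈ V(G), and let h' ∈ V(G) be a vertex of degree one whose unique neighbor is h. Let A and B be sets with A ∪ B = N_G(h) \ {h'} and A ∩ B = ∅. Let G' be the graph obtained from G by deleting h and h' and adding four new vertices h₁, h₂, h₁', h₂' together with the edges {h₁, h₁'}, {h₂, h₂'}, the edges {h₁, a} for all a ∈ A, and the edges {h₂, b} for all b ∈ B. Then the domination number of G' equals the domination number of G plus one, i.e. opt_DS(G') = opt_DS(G) + 1. -/

import Mathlib

/-- `S` is a dominating set of `G`: every vertex is in `S` or adjacent to a vertex of `S`. -/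
def IsDominatingSet {V : Type*} (G : SimpleGraph V) (S : Finset V) : Prop :=
  ∀ v : V, ∃ u ∈ S, u = v ∨ G.Adj u v

/-- The domination number of a finite graph: the minimum cardinality of a dominating set. -/
noncomputable def domNumber {V : Type*} [Fintype V] (G : SimpleGraph V) : ℕ :=
  sInf {n | ∃ S : Finset V, IsDominatingSet G S ∧ S.card = n}

lemma domNumber_le {V : Type*} [Fintype V] (G : SimpleGraph V) (S : Finset V)
    (hS : IsDominatingSet G S) : domNumber G ≤ S.card :=
  Nat.sInf_le ⟨S, hS, rfl⟩

lemma exists_min_dom {V : Type*} [Fintype V] (G : SimpleGraph V) :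
    ∃ S : Finset V, IsDominatingSet G S ∧ S.card = domNumber G := by
  have hne : {n | ∃ S : Finset V, IsDominatingSet G S ∧ S.card = n}.Nonempty :=
    ⟨(Finset.univ : Finset V).card, Finset.univ, fun v => ⟨v, Finset.mem_univ v, Or.inl rfl⟩, rfl⟩
  exact Nat.sInf_mem hne

lemma dom_swap {V : Type*} [DecidableEq V] (G : SimpleGraph V) (S : Finset V)
    (hS : IsDominatingSet G S) (a b : V)
    (hab : ∀ v, (a = v ∨ G.Adj a v) → (b = v ∨ G.Adj b v)) :
    IsDominatingSet G (insert b (S.erase a)) := by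
  intro v
  obtain ⟨u, hu, huv⟩ := hS v
  by_cases hua : u = a
  · exact ⟨b, Finset.mem_insert_self _ _, hab v (hua ▸ huv)⟩
  · exact ⟨u, Finset.mem_insert_of_mem (Finset.mem_erase.mpr ⟨hua, hu⟩), huv⟩

/-- Splitting a vertex `h` (with pendant neighbor `h'`) into two vertices `h₁, h₂`, each
with its own pendant neighbor, whose neighborhoods partition the former neighborhood of
`h`, increases the domination number by exactly one.  The vertex set of `G'` is
`{v // v ≠ h ∧ v ≠ h'} ⊕ Fin 4`, where `Sum.inr 0 = h₁`, `Sum.inr 1 = h₂`,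
`Sum.inr 2 = h₁'` and `Sum.inr 3 = h₂'`. -/
theorem domNumber_split_pendant_vertex
    {V : Type*} [Fintype V] [DecidableEq V]
    (G : SimpleGraph V) (h h' : V)
    (hnb : G.neighborSet h' = {h})
    (A B : Set V)
    (hAB : A ∪ B = G.neighborSet h \ {h'})
    (hABdisj : A ∩ B = ∅)
    (G' : SimpleGraph ({v : V // v ≠ h ∧ v ≠ h'} ⊕ Fin 4))
    (hAdj₁ : ∀ x y : {v : V // v ≠ h ∧ v ≠ h'},
      G'.Adj (Sum.inl x) (Sum.inl y) ↔ G.Adj x.val y.val)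
    (hAdj₂ : ∀ (x : {v : V // v ≠ h ∧ v ≠ h'}) (i : Fin 4),
      G'.Adj (Sum.inl x) (Sum.inr i) ↔ ((i = 0 ∧ x.val ∈ A) ∨ (i = 1 ∧ x.val ∈ B)))
    (hAdj₃ : ∀ i j : Fin 4,
      G'.Adj (Sum.inr i) (Sum.inr j) ↔
        ((i = 0 ∧ j = 2) ∨ (i = 2 ∧ j = 0) ∨ (i = 1 ∧ j = 3) ∨ (i = 3 ∧ j = 1))) :
    domNumber G' = domNumber G + 1 := by
  have hadj_h'h : G.Adj h' h := by
    have : h ∈ G.neighborSet h' := by rw [hnb]; exact rfl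
    exact this
  have hneq : h ≠ h' := (G.ne_of_adj hadj_h'h).symm
  -- vertices adjacent (in G') to `Sum.inr 2` are exactly `Sum.inr 0`, etc.
  have hadj2 : ∀ u, G'.Adj u (Sum.inr 2) → u = Sum.inr 0 := by
    intro u hu
    match u with
    | Sum.inl x =>
      rcases (hAdj₂ x 2).mp hu with ⟨h2, _⟩ | ⟨h2, _⟩ <;> exact absurd h2 (by decide)
    | Sum.inr j =>
      rcases (hAdj₃ j 2).mp hu with ⟨hj, _⟩ | ⟨hj, h2⟩ | ⟨hj, h2⟩ | ⟨hj, h2⟩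
      · exact congrArg Sum.inr hj
      · exact absurd h2 (by decide)
      · exact absurd h2 (by decide)
      · exact absurd h2 (by decide)
  have hadj3 : ∀ u, G'.Adj u (Sum.inr 3) → u = Sum.inr 1 := by
    intro u hu
    match u with
    | Sum.inl x =>
      rcases (hAdj₂ x 3).mp hu with ⟨h2, _⟩ | ⟨h2, _⟩ <;> exact absurd h2 (by decide)
    | Sum.inr j =>
      rcases (hAdj₃ j 3).mp hu with ⟨hj, h2⟩ | ⟨hj, h2⟩ | ⟨hj, _⟩ | ⟨hj, h2⟩
      · exact absurd h2 (by decide)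
      · exact absurd h2 (by decide)
      · exact congrArg Sum.inr hj
      · exact absurd h2 (by decide)
  -- First inequality: domNumber G' ≤ domNumber G + 1
  have le1 : domNumber G' ≤ domNumber G + 1 := by
    obtain ⟨S, hS, hScard⟩ := exists_min_dom G
    -- normalize so that h' ∉ S₁
    obtain ⟨S₁, hS₁, hS₁card, hh'S₁⟩ :
        ∃ S₁ : Finset V, IsDominatingSet G S₁ ∧ S₁.card ≤ S.card ∧ h' ∉ S₁ := by
      by_cases hh' : h' ∈ S
      · refine ⟨insert h (S.erase h'), dom_swap G S hS h' h ?_, ?_, ?_⟩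
        · intro v hv
          rcases hv with rfl | hv
          · exact Or.inr (G.adj_symm hadj_h'h)
          · have : v ∈ G.neighborSet h' := hv
            rw [hnb] at this
            exact Or.inl this.symm
        · calc (insert h (S.erase h')).card ≤ (S.erase h').card + 1 :=
                Finset.card_insert_le _ _
            _ = S.card - 1 + 1 := by rw [Finset.card_erase_of_mem hh']
            _ ≤ S.card := by
                have : 0 < S.card := Finset.card_pos.mpr ⟨h', hh'⟩
                omega
        · intro hmem
          rcases Finset.mem_insert.mp hmem with h1 | h1
          · exact hneq h1.symm
          · exact (Finset.mem_erase.mp h1).1 rfl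
      · exact ⟨S, hS, le_refl _, hh'⟩
    -- h ∈ S₁ since h' must be dominated
    have hhS₁ : h ∈ S₁ := by
      obtain ⟨u, hu, huv⟩ := hS₁ h'
      rcases huv with rfl | hadj
      · exact absurd hu hh'S₁
      · have : u ∈ G.neighborSet h' := G.adj_symm hadj
        rw [hnb] at this
        exact this ▸ hu
    classical
    set φ : V → ({v : V // v ≠ h ∧ v ≠ h'} ⊕ Fin 4) :=
      fun v => if hv : v ≠ h ∧ v ≠ h' then Sum.inl ⟨v, hv⟩ else Sum.inr 0 with hφ
    set T : Finset ({v : V // v ≠ h ∧ v ≠ h'} ⊕ Fin 4) :=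
      insert (Sum.inr 0) (insert (Sum.inr 1) ((S₁.erase h).image φ)) with hT
    have hTdom : IsDominatingSet G' T := by
      intro v
      match v with
      | Sum.inl x =>
        obtain ⟨u, hu, huv⟩ := hS₁ x.val
        by_cases huh : u = h
        · subst huh
          have hadj : G.Adj u x.val := by
            rcases huv with heq | hadj
            · exact absurd heq.symm x.2.1
            · exact hadj
          have hxmem : x.val ∈ A ∪ B := by
            rw [hAB]
            exact ⟨hadj, x.2.2⟩
          rcases hxmem with hxA | hxB
          · exact ⟨Sum.inr 0, Finset.mem_insert_self _ _,
              Or.inr (G'.adj_symm ((hAdj₂ x 0).mpr (Or.inl ⟨rfl, hxA⟩)))⟩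
          · exact ⟨Sum.inr 1, Finset.mem_insert_of_mem (Finset.mem_insert_self _ _),
              Or.inr (G'.adj_symm ((hAdj₂ x 1).mpr (Or.inr ⟨rfl, hxB⟩)))⟩
        · have huh' : u ≠ h' := fun he => hh'S₁ (he ▸ hu)
          have hφu : φ u = Sum.inl ⟨u, ⟨huh, huh'⟩⟩ := dif_pos ⟨huh, huh'⟩
          have hmem : Sum.inl (⟨u, ⟨huh, huh'⟩⟩ : {v : V // v ≠ h ∧ v ≠ h'}) ∈ T := by
            refine Finset.mem_insert_of_mem (Finset.mem_insert_of_mem ?_)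
            rw [← hφu]
            exact Finset.mem_image_of_mem φ (Finset.mem_erase.mpr ⟨huh, hu⟩)
          refine ⟨_, hmem, ?_⟩
          rcases huv with heq | hadj
          · exact Or.inl (congrArg Sum.inl (Subtype.ext heq))
          · exact Or.inr ((hAdj₁ _ x).mpr hadj)
      | Sum.inr i =>
        fin_cases i
        · exact ⟨Sum.inr 0, Finset.mem_insert_self _ _, Or.inl rfl⟩
        · exact ⟨Sum.inr 1, Finset.mem_insert_of_mem (Finset.mem_insert_self _ _), Or.inl rfl⟩
        · exact ⟨Sum.inr 0, Finset.mem_insert_self _ _,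
            Or.inr ((hAdj₃ 0 2).mpr (Or.inl ⟨rfl, rfl⟩))⟩
        · exact ⟨Sum.inr 1, Finset.mem_insert_of_mem (Finset.mem_insert_self _ _),
            Or.inr ((hAdj₃ 1 3).mpr (Or.inr (Or.inr (Or.inl ⟨rfl, rfl⟩))))⟩
    have hTcard : T.card ≤ domNumber G + 1 := by
      have h1 : T.card ≤ ((S₁.erase h).image φ).card + 2 := by
        calc T.card ≤ (insert (Sum.inr 1) ((S₁.erase h).image φ)).card + 1 :=
              Finset.card_insert_le _ _
          _ ≤ ((S₁.erase h).image φ).card + 1 + 1 := by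
              have := Finset.card_insert_le (Sum.inr 1 : {v : V // v ≠ h ∧ v ≠ h'} ⊕ Fin 4)
                ((S₁.erase h).image φ)
              omega
          _ = ((S₁.erase h).image φ).card + 2 := by ring
      have h2 : ((S₁.erase h).image φ).card ≤ S₁.card - 1 := by
        calc ((S₁.erase h).image φ).card ≤ (S₁.erase h).card := Finset.card_image_le
          _ = S₁.card - 1 := Finset.card_erase_of_mem hhS₁
      have h3 : 0 < S₁.card := Finset.card_pos.mpr ⟨h, hhS₁⟩
      have h4 : S₁.card ≤ domNumber G := hScard ▸ hS₁card
      omega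
    exact le_trans (domNumber_le G' T hTdom) hTcard
  -- Second inequality: domNumber G + 1 ≤ domNumber G'
  have le2 : domNumber G + 1 ≤ domNumber G' := by
    obtain ⟨T, hT, hTcard⟩ := exists_min_dom G'
    -- normalize so that inr 2 ∉ T₁ and inr 3 ∉ T₁
    obtain ⟨T₁, hT₁, hT₁card, h2T₁, h3T₁⟩ :
        ∃ T₁ : Finset ({v : V // v ≠ h ∧ v ≠ h'} ⊕ Fin 4), IsDominatingSet G' T₁ ∧
          T₁.card ≤ T.card ∧ Sum.inr 2 ∉ T₁ ∧ Sum.inr 3 ∉ T₁ := by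
      classical
      have swap2 : ∀ v, ((Sum.inr 2 : {v : V // v ≠ h ∧ v ≠ h'} ⊕ Fin 4) = v ∨
          G'.Adj (Sum.inr 2) v) → ((Sum.inr 0 : {v : V // v ≠ h ∧ v ≠ h'} ⊕ Fin 4) = v ∨
          G'.Adj (Sum.inr 0) v) := by
        intro v hv
        rcases hv with rfl | hadj
        · exact Or.inr ((hAdj₃ 0 2).mpr (Or.inl ⟨rfl, rfl⟩))
        · have := hadj2 v (G'.adj_symm hadj)
          exact Or.inl this.symm
      have swap3 : ∀ v, ((Sum.inr 3 : {v : V // v ≠ h ∧ v ≠ h'} ⊕ Fin 4) = v ∨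
          G'.Adj (Sum.inr 3) v) → ((Sum.inr 1 : {v : V // v ≠ h ∧ v ≠ h'} ⊕ Fin 4) = v ∨
          G'.Adj (Sum.inr 1) v) := by
        intro v hv
        rcases hv with rfl | hadj
        · exact Or.inr ((hAdj₃ 1 3).mpr (Or.inr (Or.inr (Or.inl ⟨rfl, rfl⟩))))
        · have := hadj3 v (G'.adj_symm hadj)
          exact Or.inl this.symm
      -- step 1 : remove inr 2
      obtain ⟨Ta, hTa, hTacard, h2Ta⟩ :
          ∃ Ta : Finset ({v : V // v ≠ h ∧ v ≠ h'} ⊕ Fin 4), IsDominatingSet G' Ta ∧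
            Ta.card ≤ T.card ∧ Sum.inr 2 ∉ Ta := by
        by_cases h2 : Sum.inr 2 ∈ T
        · refine ⟨insert (Sum.inr 0) (T.erase (Sum.inr 2)), dom_swap G' T hT _ _ swap2, ?_, ?_⟩
          · calc (insert (Sum.inr 0) (T.erase (Sum.inr 2))).card
                ≤ (T.erase (Sum.inr 2)).card + 1 := Finset.card_insert_le _ _
              _ = T.card - 1 + 1 := by rw [Finset.card_erase_of_mem h2]
              _ ≤ T.card := by
                  have : 0 < T.card := Finset.card_pos.mpr ⟨_, h2⟩
                  omega
          · intro hmem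
            rcases Finset.mem_insert.mp hmem with h1 | h1
            · exact absurd (Sum.inr.inj h1) (by decide)
            · exact (Finset.mem_erase.mp h1).1 rfl
        · exact ⟨T, hT, le_refl _, h2⟩
      by_cases h3 : Sum.inr 3 ∈ Ta
      · refine ⟨insert (Sum.inr 1) (Ta.erase (Sum.inr 3)), dom_swap G' Ta hTa _ _ swap3, ?_, ?_, ?_⟩
        · calc (insert (Sum.inr 1) (Ta.erase (Sum.inr 3))).card
              ≤ (Ta.erase (Sum.inr 3)).card + 1 := Finset.card_insert_le _ _
            _ = Ta.card - 1 + 1 := by rw [Finset.card_erase_of_mem h3]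
            _ ≤ T.card := by
                have : 0 < Ta.card := Finset.card_pos.mpr ⟨_, h3⟩
                omega
        · intro hmem
          rcases Finset.mem_insert.mp hmem with h1 | h1
          · exact absurd (Sum.inr.inj h1) (by decide)
          · exact h2Ta (Finset.mem_of_mem_erase h1)
        · intro hmem
          rcases Finset.mem_insert.mp hmem with h1 | h1
          · exact absurd (Sum.inr.inj h1) (by decide)
          · exact (Finset.mem_erase.mp h1).1 rfl
      · exact ⟨Ta, hTa, hTacard, h2Ta, h3⟩
    -- inr 0 ∈ T₁ and inr 1 ∈ T₁
    have h0T₁ : (Sum.inr 0 : {v : V // v ≠ h ∧ v ≠ h'} ⊕ Fin 4) ∈ T₁ := by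
      obtain ⟨u, hu, huv⟩ := hT₁ (Sum.inr 2)
      rcases huv with rfl | hadj
      · exact absurd hu h2T₁
      · exact (hadj2 u hadj) ▸ hu
    have h1T₁ : (Sum.inr 1 : {v : V // v ≠ h ∧ v ≠ h'} ⊕ Fin 4) ∈ T₁ := by
      obtain ⟨u, hu, huv⟩ := hT₁ (Sum.inr 3)
      rcases huv with rfl | hadj
      · exact absurd hu h3T₁
      · exact (hadj3 u hadj) ▸ hu
    classical
    set ψ : ({v : V // v ≠ h ∧ v ≠ h'} ⊕ Fin 4) → V :=
      Sum.elim (fun x => x.val) (fun _ => h) with hψ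
    set S : Finset V := (T₁.erase (Sum.inr 1)).image ψ with hSdef
    have hhS : h ∈ S := by
      refine Finset.mem_image.mpr ⟨Sum.inr 0, Finset.mem_erase.mpr ⟨?_, h0T₁⟩, rfl⟩
      intro he
      exact absurd (Sum.inr.inj he) (by decide)
    have hSdom : IsDominatingSet G S := by
      intro v
      by_cases hvh : v = h
      · exact ⟨h, hhS, Or.inl hvh.symm⟩
      by_cases hvh' : v = h'
      · exact ⟨h, hhS, Or.inr (hvh' ▸ G.adj_symm hadj_h'h)⟩
      obtain ⟨u, hu, huv⟩ := hT₁ (Sum.inl ⟨v, ⟨hvh, hvh'⟩⟩)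
      match u with
      | Sum.inl w =>
        have hwS : w.val ∈ S := by
          refine Finset.mem_image.mpr ⟨Sum.inl w, Finset.mem_erase.mpr ⟨?_, hu⟩, rfl⟩
          exact fun he => Sum.inl_ne_inr he
        refine ⟨w.val, hwS, ?_⟩
        rcases huv with heq | hadj
        · exact Or.inl (congrArg Subtype.val (Sum.inl.inj heq))
        · exact Or.inr ((hAdj₁ w ⟨v, ⟨hvh, hvh'⟩⟩).mp hadj)
      | Sum.inr i =>
        have hadj : G'.Adj (Sum.inl (⟨v, ⟨hvh, hvh'⟩⟩ : {v : V // v ≠ h ∧ v ≠ h'}))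
            (Sum.inr i) := by
          rcases huv with heq | hadj
          · exact absurd heq (fun he => Sum.inr_ne_inl he)
          · exact G'.adj_symm hadj
        have hvAB : v ∈ A ∪ B := by
          rcases (hAdj₂ _ i).mp hadj with ⟨_, hA⟩ | ⟨_, hB⟩
          · exact Or.inl hA
          · exact Or.inr hB
        rw [hAB] at hvAB
        exact ⟨h, hhS, Or.inr hvAB.1⟩
    have hScard : S.card ≤ T.card - 1 := by
      calc S.card ≤ (T₁.erase (Sum.inr 1)).card := Finset.card_image_le
        _ = T₁.card - 1 := Finset.card_erase_of_mem h1T₁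
        _ ≤ T.card - 1 := by omega
    have hTpos : 0 < T.card := by
      have : 0 < T₁.card := Finset.card_pos.mpr ⟨_, h0T₁⟩
      omega
    have := domNumber_le G S hSdom
    omega
  omega
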